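/- arXiv:math/9907119 — 2 statements merged into one kernel-verified Lean document; each statement's English description precedes it below -/
import Mathlib

section
/- For every n ≥ 3, the tensor product K_n ⊗ K_n is not a circulant graph. -/
open SimpleGraph

/-- A graph is circulant iff its automorphism group contains a transitive cyclic subgroup,
i.e. some automorphism whose iterates act transitively on the vertices. -/
def SimpleGraph.IsCirculant {V : Type*} (G : SimpleGraph V) : Prop :=
  ∃ φ : G ≃g G, ∀ v w : V, ∃ k : ℕ, (φ.toEquiv ^ k) v = w

/-- The tensor (categorical/Kronecker) product of simple graphs. -/
def SimpleGraph.tensor {α β : Type*} (G : SimpleGraph α) (H : SimpleGraph β) :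
    SimpleGraph (α × β) where
  Adj x y := G.Adj x.1 y.1 ∧ H.Adj x.2 y.2
  symm.symm _ _ h := ⟨G.adj_symm h.1, H.adj_symm h.2⟩
  loopless.irrefl x h := G.loopless.irrefl x.1 h.1

private lemma tensor_card_le_of_period {γ : Type*} [Fintype γ] [DecidableEq γ]
    (g : γ → γ) (x : γ) (hsurj : ∀ y, ∃ k, g^[k] x = y)
    (d : ℕ) (hd : 0 < d) (hdx : g^[d] x = x) :
    Fintype.card γ ≤ d := by
  have hmul : ∀ m, g^[d * m] x = x := by
    intro m
    induction m with
    | zero => simp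
    | succ m ih => rw [Nat.mul_succ, Function.iterate_add_apply, hdx, ih]
  have hmem : ∀ y : γ, y ∈ (Finset.range d).image (fun k => g^[k] x) := by
    intro y
    obtain ⟨k, hk⟩ := hsurj y
    refine Finset.mem_image.mpr ⟨k % d, Finset.mem_range.mpr (Nat.mod_lt _ hd), ?_⟩
    rw [← hk]
    conv_rhs => rw [← Nat.mod_add_div k d]
    rw [Function.iterate_add_apply, hmul]
  calc Fintype.card γ = (Finset.univ : Finset γ).card := (Finset.card_univ).symm
    _ ≤ ((Finset.range d).image (fun k => g^[k] x)).card :=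
        Finset.card_le_card (fun y _ => hmem y)
    _ ≤ (Finset.range d).card := Finset.card_image_le
    _ = d := Finset.card_range d

private lemma tensor_exists_small_period {γ : Type*} [Fintype γ] [DecidableEq γ]
    (g : γ → γ) (hg : Function.Injective g) (x : γ) :
    ∃ d, 0 < d ∧ d ≤ Fintype.card γ ∧ g^[d] x = x := by
  have hni : ¬ Function.Injective (fun k : Fin (Fintype.card γ + 1) => g^[(k : ℕ)] x) := by
    intro hinj
    have := Fintype.card_le_of_injective _ hinj
    simp at this
  rw [Function.not_injective_iff] at hni
  obtain ⟨i, j, hij, hne⟩ := hni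
  rcases Nat.lt_or_ge (i : ℕ) (j : ℕ) with hlt | hge
  · refine ⟨(j : ℕ) - (i : ℕ), by omega, by have := j.2; omega, ?_⟩
    have key : g^[(i : ℕ)] (g^[(j : ℕ) - (i : ℕ)] x) = g^[(i : ℕ)] x := by
      rw [← Function.iterate_add_apply]
      have : (i : ℕ) + ((j : ℕ) - (i : ℕ)) = (j : ℕ) := by omega
      rw [this, hij]
    exact (hg.iterate (i : ℕ)) key
  · have hlt : (j : ℕ) < (i : ℕ) := by
      rcases Nat.lt_or_ge (j : ℕ) (i : ℕ) with h | h
      · exact h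
      · exact absurd (Fin.ext (by omega)) hne
    refine ⟨(i : ℕ) - (j : ℕ), by omega, by have := i.2; omega, ?_⟩
    have key : g^[(j : ℕ)] (g^[(i : ℕ) - (j : ℕ)] x) = g^[(j : ℕ)] x := by
      rw [← Function.iterate_add_apply]
      have : (j : ℕ) + ((i : ℕ) - (j : ℕ)) = (i : ℕ) := by omega
      rw [this, hij]
    exact (hg.iterate (j : ℕ)) key

private lemma tensor_iterate_card_fix {γ : Type*} [Fintype γ] [DecidableEq γ]
    (g : γ → γ) (hg : Function.Injective g) (x : γ) (hsurj : ∀ y, ∃ k, g^[k] x = y) :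
    g^[Fintype.card γ] x = x := by
  obtain ⟨d, hd0, hdle, hdx⟩ := tensor_exists_small_period g hg x
  have hle := tensor_card_le_of_period g x hsurj d hd0 hdx
  have hdeq : d = Fintype.card γ := le_antisymm hdle hle
  rwa [← hdeq]

private lemma tensor_struct {n : ℕ} (f : Fin n × Fin n ≃ Fin n × Fin n)
    (hf : ∀ p q : Fin n × Fin n,
      ((f p).1 = (f q).1 ∨ (f p).2 = (f q).2) ↔ (p.1 = q.1 ∨ p.2 = q.2))
    (z o : Fin n) (hzo : z ≠ o) (h0 : (f (z, z)).1 = (f (z, o)).1) :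
    ∃ α β : Fin n → Fin n, ∀ p : Fin n × Fin n, f p = (α p.1, β p.2) := by
  have inj := f.injective
  have row0 : ∀ y, (f (z, y)).1 = (f (z, z)).1 := by
    intro y
    by_contra h
    have h1 : (f (z, y)).2 = (f (z, z)).2 := by
      rcases (hf (z, y) (z, z)).mpr (Or.inl rfl) with h' | h'
      · exact absurd h' h
      · exact h'
    have h2 : (f (z, y)).2 = (f (z, o)).2 := by
      rcases (hf (z, y) (z, o)).mpr (Or.inl rfl) with h' | h'
      · exact absurd (h'.trans h0.symm) h
      · exact h'
    have heq : f (z, z) = f (z, o) := Prod.ext h0 (h1.symm.trans h2)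
    exact hzo (congrArg Prod.snd (inj heq))
  have row0_snd_inj : Function.Injective (fun y => (f (z, y)).2) := by
    intro y y' h
    have h1 : (f (z, y)).1 = (f (z, y')).1 := (row0 y).trans (row0 y').symm
    have heq : f (z, y) = f (z, y') := Prod.ext h1 h
    exact congrArg Prod.snd (inj heq)
  have row0_surj : ∀ w : Fin n × Fin n, w.1 = (f (z, z)).1 → ∃ y, f (z, y) = w := by
    intro w hw
    obtain ⟨y, hy⟩ := (Finite.injective_iff_surjective.mp row0_snd_inj) w.2
    exact ⟨y, Prod.ext ((row0 y).trans hw.symm) hy⟩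
  have col : ∀ c x, (f (x, c)).2 = (f (z, c)).2 := by
    intro c x
    by_cases hx : x = z
    · rw [hx]
    · rcases (hf (x, c) (z, c)).mpr (Or.inr rfl) with h' | h'
      · exfalso
        obtain ⟨y, hy⟩ := row0_surj (f (x, c)) (h'.trans (row0 c))
        exact hx ((congrArg Prod.fst (inj hy)).symm)
      · exact h'
  have row : ∀ r y, (f (r, y)).1 = (f (r, z)).1 := by
    intro r y
    rcases (hf (r, y) (r, z)).mpr (Or.inl rfl) with h' | h'
    · exact h'
    · have hy : (f (r, y)).2 = (f (z, y)).2 := col y r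
      have hz2 : (f (r, z)).2 = (f (z, z)).2 := col z r
      have hyz : y = z := row0_snd_inj (by
        show (f (z, y)).2 = (f (z, z)).2
        rw [← hy, ← hz2, h'])
      rw [hyz]
  refine ⟨fun r => (f (r, z)).1, fun c => (f (z, c)).2, ?_⟩
  intro p
  exact Prod.ext (row p.1 p.2) (col p.2 p.1)

private lemma tensor_key {n : ℕ} (f : Fin n × Fin n ≃ Fin n × Fin n)
    (hf : ∀ p q : Fin n × Fin n,
      ((f p).1 = (f q).1 ∨ (f p).2 = (f q).2) ↔ (p.1 = q.1 ∨ p.2 = q.2))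
    (z o : Fin n) (hzo : z ≠ o) :
    (∃ α β : Fin n → Fin n, ∀ p : Fin n × Fin n, f p = (α p.1, β p.2)) ∨
    (∃ α β : Fin n → Fin n, ∀ p : Fin n × Fin n, f p = (α p.2, β p.1)) := by
  by_cases h0 : (f (z, z)).1 = (f (z, o)).1
  · exact Or.inl (tensor_struct f hf z o hzo h0)
  · right
    have hsnd : (f (z, z)).2 = (f (z, o)).2 := by
      rcases (hf (z, z) (z, o)).mpr (Or.inl rfl) with h | h
      · exact absurd h h0
      · exact h
    set g : Fin n × Fin n ≃ Fin n × Fin n := f.trans (Equiv.prodComm _ _) with hg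
    have hgapp : ∀ p, g p = ((f p).2, (f p).1) := fun p => rfl
    have hgf : ∀ p q : Fin n × Fin n,
        ((g p).1 = (g q).1 ∨ (g p).2 = (g q).2) ↔ (p.1 = q.1 ∨ p.2 = q.2) := by
      intro p q
      rw [hgapp, hgapp, ← hf p q]
      exact or_comm
    obtain ⟨α, β, hab⟩ := tensor_struct g hgf z o hzo (by rw [hgapp, hgapp]; exact hsnd)
    refine ⟨β, α, fun p => ?_⟩
    have h := hab p
    rw [hgapp] at h
    exact Prod.ext (congrArg Prod.snd h) (congrArg Prod.fst h)

theorem stmt_8 (n : ℕ) (hn : 3 ≤ n) :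
    ¬ ((completeGraph (Fin n)).tensor (completeGraph (Fin n))).IsCirculant := by
  rintro ⟨φ, hφ⟩
  set f := φ.toEquiv with hfdef
  have hpow : ∀ (k : ℕ) (v : Fin n × Fin n), (φ.toEquiv ^ k) v = (⇑f)^[k] v := by
    intro k
    induction k with
    | zero => intro v; rfl
    | succ k ih =>
      intro v
      rw [pow_succ, Equiv.Perm.mul_apply, ih, ← Function.iterate_succ_apply]
  have hf : ∀ p q : Fin n × Fin n,
      ((f p).1 = (f q).1 ∨ (f p).2 = (f q).2) ↔ (p.1 = q.1 ∨ p.2 = q.2) := by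
    intro p q
    have h : ((f p).1 ≠ (f q).1 ∧ (f p).2 ≠ (f q).2) ↔ (p.1 ≠ q.1 ∧ p.2 ≠ q.2) :=
      φ.map_adj_iff (v := p) (w := q)
    constructor
    · intro hor
      by_contra hcon
      push_neg at hcon
      rcases h.mpr hcon with ⟨h1, h2⟩
      rcases hor with h' | h'
      · exact h1 h'
      · exact h2 h'
    · intro hor
      by_contra hcon
      push_neg at hcon
      rcases h.mp hcon with ⟨h1, h2⟩
      rcases hor with h' | h'
      · exact h1 h'
      · exact h2 h'
  have hz : (0 : ℕ) < n := by omega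
  set z : Fin n := ⟨0, by omega⟩ with hzdef
  set o : Fin n := ⟨1, by omega⟩ with hodef
  have hzo : z ≠ o := Fin.ne_of_val_ne (by simp)
  have hsurj_f : ∀ w, ∃ k, (⇑f)^[k] (z, z) = w := by
    intro w
    obtain ⟨k, hk⟩ := hφ (z, z) w
    exact ⟨k, by rw [← hpow]; exact hk⟩
  rcases tensor_key f hf z o hzo with ⟨α, β, hab⟩ | ⟨α, β, hab⟩
  · -- product form: f p = (α p.1, β p.2)
    have hα : Function.Injective α := by
      intro a a' h
      have heq : f (a, z) = f (a', z) := by rw [hab (a, z), hab (a', z), h]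
      exact congrArg Prod.fst (f.injective heq)
    have hβ : Function.Injective β := by
      intro a a' h
      have heq : f (z, a) = f (z, a') := by rw [hab (z, a), hab (z, a'), h]
      exact congrArg Prod.snd (f.injective heq)
    have hiter : ∀ (k : ℕ) (p : Fin n × Fin n),
        (⇑f)^[k] p = (α^[k] p.1, β^[k] p.2) := by
      intro k
      induction k with
      | zero => intro p; rfl
      | succ k ih =>
        intro p
        rw [Function.iterate_succ_apply', ih, hab,
          Function.iterate_succ_apply' α, Function.iterate_succ_apply' β]
    have hsurj_α : ∀ x, ∃ k, α^[k] z = x := by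
      intro x
      obtain ⟨k, hk⟩ := hsurj_f (x, z)
      rw [hiter] at hk
      exact ⟨k, congrArg Prod.fst hk⟩
    have hsurj_β : ∀ x, ∃ k, β^[k] z = x := by
      intro x
      obtain ⟨k, hk⟩ := hsurj_f (z, x)
      rw [hiter] at hk
      exact ⟨k, congrArg Prod.snd hk⟩
    have hαfix : α^[n] z = z := by
      have h := tensor_iterate_card_fix α hα z hsurj_α
      simpa using h
    have hβfix : β^[n] z = z := by
      have h := tensor_iterate_card_fix β hβ z hsurj_β
      simpa using h
    have hffix : (⇑f)^[n] (z, z) = (z, z) := by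
      rw [hiter]
      exact Prod.ext hαfix hβfix
    have hcard := tensor_card_le_of_period (⇑f) (z, z) hsurj_f n hz hffix
    rw [Fintype.card_prod, Fintype.card_fin] at hcard
    nlinarith
  · -- swap form: f p = (α p.2, β p.1)
    set S : Finset (Fin n × Fin n) :=
      (Finset.univ.image fun x => (x, β x)) ∪
      (Finset.univ.image fun x => (α (β x), β x)) with hS
    have hstep : ∀ k, (⇑f)^[k] (z, β z) ∈ S := by
      intro k
      induction k with
      | zero =>
        exact Finset.mem_union_left _
          (Finset.mem_image.mpr ⟨z, Finset.mem_univ z, rfl⟩)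
      | succ k ih =>
        rw [Function.iterate_succ_apply']
        rcases Finset.mem_union.mp ih with h | h
        · obtain ⟨x, -, hx⟩ := Finset.mem_image.mp h
          rw [← hx, hab]
          exact Finset.mem_union_right _
            (Finset.mem_image.mpr ⟨x, Finset.mem_univ x, rfl⟩)
        · obtain ⟨x, -, hx⟩ := Finset.mem_image.mp h
          rw [← hx, hab]
          exact Finset.mem_union_left _
            (Finset.mem_image.mpr ⟨α (β x), Finset.mem_univ _, rfl⟩)
    have hsub : (Finset.univ : Finset (Fin n × Fin n)) ⊆ S := by
      intro w _
      obtain ⟨k, hk⟩ := hφ (z, β z) w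
      rw [hpow] at hk
      rw [← hk]
      exact hstep k
    have h1 : n * n ≤ S.card := by
      have h := Finset.card_le_card hsub
      rwa [Finset.card_univ, Fintype.card_prod, Fintype.card_fin] at h
    have h2 : S.card ≤ n + n := by
      refine le_trans (Finset.card_union_le _ _) ?_
      have ha := Finset.card_image_le
        (s := (Finset.univ : Finset (Fin n))) (f := fun x => (x, β x))
      have hb := Finset.card_image_le
        (s := (Finset.univ : Finset (Fin n))) (f := fun x => (α (β x), β x))
      rw [Finset.card_univ, Fintype.card_fin] at ha hb
      omega
    nlinarith
end

section
/- Let G be a connected bipartite graph that is regular of odd degree, and let H be a connected non-bipartite graph that is regular of odd degree. Then G ⊗ H is not circulant. -/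
open SimpleGraph

section AuxLemmas

variable {α β γ : Type*}

@[simp] lemma tensor_adj_aux (G : SimpleGraph α) (H : SimpleGraph β) (x y : α × β) :
    (G.tensor H).Adj x y ↔ G.Adj x.1 y.1 ∧ H.Adj x.2 y.2 := Iff.rfl

instance tensorDecAdjAux (G : SimpleGraph α) (H : SimpleGraph β)
    [DecidableRel G.Adj] [DecidableRel H.Adj] : DecidableRel (G.tensor H).Adj :=
  fun x y => inferInstanceAs (Decidable (G.Adj x.1 y.1 ∧ H.Adj x.2 y.2))

lemma even_card_of_odd_regular [Fintype γ] (K : SimpleGraph γ) [DecidableRel K.Adj]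
    {d : ℕ} (hreg : K.IsRegularOfDegree d) (hd : Odd d) : Even (Fintype.card γ) := by
  have h := K.sum_degrees_eq_twice_card_edges
  rw [Finset.sum_congr rfl (fun v _ => hreg v), Finset.sum_const, smul_eq_mul,
    Finset.card_univ] at h
  have he : Even (Fintype.card γ * d) := ⟨K.edgeFinset.card, by omega⟩
  rcases Nat.even_mul.mp he with h1 | h2
  · exact h1
  · exact absurd h2 (Nat.not_even_iff_odd.mpr hd)

lemma pad_walk (K : SimpleGraph γ) (hnb : ∀ x : γ, ∃ y, K.Adj x y) :
    ∀ (k : ℕ) {a a' : γ} (w : K.Walk a a'), ∃ w' : K.Walk a a', w'.length = w.length + 2 * k := by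
  intro k
  induction k with
  | zero => intro a a' w; exact ⟨w, by ring⟩
  | succ k ih =>
    intro a a' w
    obtain ⟨y, hy⟩ := hnb a
    obtain ⟨w', hw'⟩ := ih (Walk.cons hy (Walk.cons hy.symm w))
    exact ⟨w', by simp [hw']; ring⟩

lemma zip_walk (G : SimpleGraph α) (H : SimpleGraph β) :
    ∀ (n : ℕ) ⦃a a' : α⦄ ⦃b b' : β⦄ (w1 : G.Walk a a') (w2 : H.Walk b b'),
      w1.length = n → w2.length = n → Nonempty ((G.tensor H).Walk (a, b) (a', b'))
  | 0, a, a', b, b', w1, w2, h1, h2 => by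
    cases w1 with
    | nil =>
      cases w2 with
      | nil => exact ⟨Walk.nil⟩
      | cons _ _ => simp at h2
    | cons _ _ => simp at h1
  | (n+1), a, a', b, b', w1, w2, h1, h2 => by
    cases w1 with
    | nil => simp at h1
    | @cons _ c _ hadj1 w1' =>
      cases w2 with
      | nil => simp at h2
      | @cons _ e _ hadj2 w2' =>
        obtain ⟨w⟩ := zip_walk G H n w1' w2' (by simpa using h1) (by simpa using h2)
        exact ⟨Walk.cons (show (G.tensor H).Adj (a, b) (c, e) from ⟨hadj1, hadj2⟩) w⟩

lemma exists_odd_closed_walk (K : SimpleGraph γ) (hconn : K.Connected)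
    (h : ¬ K.Colorable 2) : ∃ (x : γ) (w : K.Walk x x), Odd w.length := by
  classical
  by_contra hno
  push_neg at hno
  obtain ⟨x₀⟩ := hconn.nonempty
  refine h ⟨SimpleGraph.Coloring.mk
    (fun b => if ∃ w : K.Walk x₀ b, Even w.length then (0 : Fin 2) else 1) ?_⟩
  intro b b' hadj
  by_cases hb : ∃ w : K.Walk x₀ b, Even w.length
  · have hb' : ¬ ∃ w : K.Walk x₀ b', Even w.length := by
      rintro ⟨w', hw'⟩
      obtain ⟨w, hw⟩ := hb
      refine hno x₀ (w.append (Walk.cons hadj w'.reverse)) ?_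
      simp only [Walk.length_append, Walk.length_cons, Walk.length_reverse]
      obtain ⟨s, hs⟩ := hw; obtain ⟨t, ht⟩ := hw'
      exact ⟨s + t, by omega⟩
    simp only [if_pos hb, if_neg hb']
    decide
  · have hb' : ∃ w : K.Walk x₀ b', Even w.length := by
      obtain ⟨w⟩ := hconn x₀ b
      have hodd : ¬ Even w.length := fun hw => hb ⟨w, hw⟩
      rw [Nat.not_even_iff_odd] at hodd
      obtain ⟨t, ht⟩ := hodd
      exact ⟨w.append (Walk.cons hadj Walk.nil), by
        simp only [Walk.length_append, Walk.length_cons, Walk.length_nil]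
        exact ⟨t + 1, by omega⟩⟩
    simp only [if_neg hb, if_pos hb']
    decide

lemma walks_all_parities (H : SimpleGraph β) (hconn : H.Connected)
    (hbip : ¬ H.Colorable 2) (b b' : β) (n : ℕ) :
    ∃ w : H.Walk b b', w.length % 2 = n % 2 := by
  obtain ⟨x, ℓ, hℓ⟩ := exists_odd_closed_walk H hconn hbip
  obtain ⟨u⟩ := hconn b x
  obtain ⟨v⟩ := hconn x b'
  by_cases hc : (u.append v).length % 2 = n % 2
  · exact ⟨u.append v, hc⟩
  · refine ⟨u.append (ℓ.append v), ?_⟩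
    obtain ⟨t, ht⟩ := hℓ
    simp only [Walk.length_append] at hc ⊢
    omega

lemma even_card_of_neg_closed {M : Type*} [SubtractionMonoid M] [DecidableEq M] (S : Finset M)
    (hcl : ∀ s ∈ S, -s ∈ S) (hfix : ∀ s ∈ S, -s ≠ s) : Even S.card := by
  classical
  induction S using Finset.strongInduction with
  | _ S ih =>
    rcases S.eq_empty_or_nonempty with rfl | ⟨s, hs⟩
    · simp
    · have hns : -s ∈ S := hcl s hs
      have hne : -s ≠ s := hfix s hs
      have hsubset : ({s, -s} : Finset M) ⊆ S := by
        intro x hx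
        rcases Finset.mem_insert.mp hx with rfl | hx
        · exact hs
        · rw [Finset.mem_singleton.mp hx]; exact hns
      have hssub : S \ {s, -s} ⊂ S :=
        Finset.sdiff_ssubset hsubset ⟨s, Finset.mem_insert_self _ _⟩
      have hcl' : ∀ t ∈ S \ {s, -s}, -t ∈ S \ {s, -s} := by
        intro t ht
        rw [Finset.mem_sdiff] at ht ⊢
        obtain ⟨htS, htn⟩ := ht
        refine ⟨hcl t htS, ?_⟩
        intro hmem
        rcases Finset.mem_insert.mp hmem with h | h
        · apply htn
          rw [Finset.mem_insert, Finset.mem_singleton]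
          right; rw [← h, neg_neg]
        · apply htn
          rw [Finset.mem_singleton] at h
          have : t = s := by
            have := congrArg Neg.neg h
            rwa [neg_neg, neg_neg] at this
          rw [Finset.mem_insert]; left; exact this
      have hfix' : ∀ t ∈ S \ {s, -s}, -t ≠ t := fun t ht =>
        hfix t (Finset.mem_sdiff.mp ht).1
      have heven := ih _ hssub hcl' hfix'
      have hpair : ({s, -s} : Finset M).card = 2 := Finset.card_pair (Ne.symm hne)
      have hcards : (S \ {s, -s}).card = S.card - 2 := by
        rw [Finset.card_sdiff_of_subset hsubset, hpair]
      have hge : 2 ≤ S.card := by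
        calc 2 = ({s, -s} : Finset M).card := hpair.symm
        _ ≤ S.card := Finset.card_le_card hsubset
      rw [hcards] at heven
      obtain ⟨r, hr⟩ := heven
      exact ⟨r + 1, by omega⟩

end AuxLemmas

theorem stmt_19 {α β : Type*} [Fintype α] [Fintype β]
    (G : SimpleGraph α) (H : SimpleGraph β)
    [DecidableRel G.Adj] [DecidableRel H.Adj] (d₁ d₂ : ℕ)
    (hGconn : G.Connected) (hGbip : G.Colorable 2)
    (hGreg : G.IsRegularOfDegree d₁) (hd₁ : Odd d₁)
    (hHconn : H.Connected) (hHbip : ¬ H.Colorable 2)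
    (hHreg : H.IsRegularOfDegree d₂) (hd₂ : Odd d₂) :
    ¬ (G.tensor H).IsCirculant := by
  classical
  set T := G.tensor H with hT
  rintro ⟨φ, hφ⟩
  haveI hne' : Nonempty (α × β) := ⟨(hGconn.nonempty.some, hHconn.nonempty.some)⟩
  obtain ⟨v₀⟩ := id hne'
  set N := Fintype.card (α × β) with hNdef
  have hNpos : 0 < N := Fintype.card_pos
  haveI : NeZero N := ⟨hNpos.ne'⟩
  set π := φ.toEquiv with hπ
  -- powers of φ preserve adjacency
  have hAdjPow : ∀ (k : ℕ) (v w : α × β), T.Adj ((π ^ k) v) ((π ^ k) w) ↔ T.Adj v w := by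
    intro k
    induction k with
    | zero => intro v w; simp
    | succ k ih =>
      intro v w
      rw [pow_succ, Equiv.Perm.mul_apply, Equiv.Perm.mul_apply, ih]
      exact φ.map_adj_iff
  -- a power fixing one vertex fixes everything
  have hfixall : ∀ (v : α × β) (u : ℕ), (π ^ u) v = v → π ^ u = 1 := by
    intro v u hv
    apply Equiv.ext
    intro w
    obtain ⟨k, hk⟩ := hφ v w
    have hcomm : (π ^ u) ((π ^ k) v) = (π ^ k) ((π ^ u) v) := by
      rw [← Equiv.Perm.mul_apply, ← Equiv.Perm.mul_apply, ← pow_add, ← pow_add, add_comm]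
    rw [← hk, hcomm, hv, Equiv.Perm.one_apply]
  -- no small positive power is the identity
  have hle : ∀ t : ℕ, 0 < t → π ^ t = 1 → N ≤ t := by
    intro t ht h1
    have hsurj : Function.Surjective (fun i : Fin t => (π ^ (i : ℕ)) v₀) := by
      intro w
      obtain ⟨k, hk⟩ := hφ v₀ w
      refine ⟨⟨k % t, Nat.mod_lt _ ht⟩, ?_⟩
      have hkt : π ^ k = π ^ (k % t) := by
        conv_lhs => rw [← Nat.mod_add_div k t]
        rw [pow_add, pow_mul, h1, one_pow, mul_one]
      show (π ^ (k % t)) v₀ = w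
      rw [← hkt]; exact hk
    have := Fintype.card_le_of_surjective _ hsurj
    rwa [Fintype.card_fin] at this
  have key : ∀ i j : ℕ, i < j → j < N → (π ^ i) v₀ = (π ^ j) v₀ → False := by
    intro i j hij hjN hEq
    have h1 : (π ^ (j - i)) ((π ^ i) v₀) = (π ^ i) v₀ := by
      rw [← Equiv.Perm.mul_apply, ← pow_add, Nat.sub_add_cancel (le_of_lt hij)]
      exact hEq.symm
    have h2 := hfixall _ _ h1
    have := hle (j - i) (by omega) h2
    omega
  have hinj : Function.Injective (fun i : Fin N => (π ^ (i : ℕ)) v₀) := by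
    intro i j hij
    rcases Nat.lt_trichotomy (i : ℕ) (j : ℕ) with h | h | h
    · exact (key _ _ h j.isLt hij).elim
    · exact Fin.ext h
    · exact (key _ _ h i.isLt hij.symm).elim
  have hbij : Function.Bijective (fun i : Fin N => (π ^ (i : ℕ)) v₀) :=
    (Fintype.bijective_iff_injective_and_card _).mpr ⟨hinj, by rw [Fintype.card_fin]⟩
  have hNone : π ^ N = 1 := by
    obtain ⟨i, hi⟩ := hbij.surjective ((π ^ N) v₀)
    simp only [] at hi
    rcases Nat.eq_zero_or_pos (i : ℕ) with h0 | hpos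
    · refine hfixall v₀ N ?_
      rw [← hi, h0, pow_zero, Equiv.Perm.one_apply]
    · exfalso
      have h1 : (π ^ (N - (i : ℕ))) ((π ^ (i : ℕ)) v₀) = (π ^ (i : ℕ)) v₀ := by
        rw [← Equiv.Perm.mul_apply, ← pow_add, Nat.sub_add_cancel (le_of_lt i.isLt)]
        exact hi.symm
      have h2 := hfixall _ _ h1
      have h3 := hle _ (by have := i.isLt; omega) h2
      have := i.isLt; omega
  have hmod : ∀ k : ℕ, π ^ k = π ^ (k % N) := by
    intro k
    conv_lhs => rw [← Nat.mod_add_div k N]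
    rw [pow_add, pow_mul, hNone, one_pow, mul_one]
  -- the bijection from ZMod N
  set f : ZMod N → α × β := fun s => (π ^ s.val) v₀ with hfdef
  have hfinj : Function.Injective f := by
    intro s t h
    have hs := ZMod.val_lt s
    have ht := ZMod.val_lt t
    have hval : s.val = t.val := by
      rcases Nat.lt_trichotomy s.val t.val with hc | hc | hc
      · exact (key _ _ hc ht h).elim
      · exact hc
      · exact (key _ _ hc hs h.symm).elim
    exact ZMod.val_injective N hval
  have hfsurj : Function.Surjective f := by
    intro w
    obtain ⟨i, hi⟩ := hbij.surjective w
    refine ⟨((i : ℕ) : ZMod N), ?_⟩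
    show (π ^ (((i : ℕ) : ZMod N)).val) v₀ = w
    rw [ZMod.val_natCast, Nat.mod_eq_of_lt i.isLt]
    exact hi
  have hf0 : f 0 = v₀ := by
    show (π ^ (0 : ZMod N).val) v₀ = v₀
    rw [ZMod.val_zero, pow_zero, Equiv.Perm.one_apply]
  have hfadd : ∀ (s : ZMod N) (k : ℕ), (π ^ k) (f s) = f (s + (k : ZMod N)) := by
    intro s k
    show (π ^ k) ((π ^ s.val) v₀) = (π ^ (s + (k : ZMod N)).val) v₀
    rw [← Equiv.Perm.mul_apply, ← pow_add]
    have h2 : (s + (k : ZMod N)).val = (k + s.val) % N := by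
      rw [ZMod.val_add, ZMod.val_natCast]
      conv_rhs => rw [Nat.add_comm k s.val, Nat.add_mod]
      rw [Nat.mod_eq_of_lt (ZMod.val_lt s)]
    rw [h2, ← hmod]
  -- translation invariance of adjacency
  have hneg : ∀ s : ZMod N, ((N - s.val : ℕ) : ZMod N) = -s := by
    intro s
    rw [Nat.cast_sub (le_of_lt (ZMod.val_lt s)), ZMod.natCast_self,
      ZMod.natCast_val, ZMod.cast_id]
    ring
  have htrans : ∀ s t : ZMod N, T.Adj (f s) (f t) ↔ T.Adj v₀ (f (t - s)) := by
    intro s t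
    have hk := hAdjPow (N - s.val) (f s) (f t)
    rw [hfadd, hfadd, hneg s] at hk
    have hs0 : s + -s = 0 := by ring
    have ht0 : t + -s = t - s := by ring
    rw [hs0, ht0, hf0] at hk
    exact hk.symm
  -- the connection set
  set S : Finset (ZMod N) := Finset.univ.filter (fun s => T.Adj v₀ (f s)) with hSdef
  have hnbF : T.neighborFinset v₀ = (G.neighborFinset v₀.1) ×ˢ (H.neighborFinset v₀.2) := by
    ext ⟨x, y⟩
    simp [mem_neighborFinset, Finset.mem_product, hT]
  have hdeg : (T.neighborFinset v₀).card = d₁ * d₂ := by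
    rw [hnbF, Finset.card_product]
    have h1 : (G.neighborFinset v₀.1).card = d₁ := hGreg v₀.1
    have h2 : (H.neighborFinset v₀.2).card = d₂ := hHreg v₀.2
    rw [h1, h2]
  have hScard : S.card = d₁ * d₂ := by
    rw [← hdeg]
    apply Finset.card_bij (fun s _ => f s)
    · intro s hs
      rw [mem_neighborFinset]
      exact (Finset.mem_filter.mp hs).2
    · intro s _ t _ h
      exact hfinj h
    · intro w hw
      obtain ⟨s, rfl⟩ := hfsurj w
      rw [mem_neighborFinset] at hw
      exact ⟨s, Finset.mem_filter.mpr ⟨Finset.mem_univ _, hw⟩, rfl⟩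
  have hSodd : Odd S.card := by
    rw [hScard]; exact hd₁.mul hd₂
  have hSsymm : ∀ s ∈ S, -s ∈ S := by
    intro s hs
    have hadj : T.Adj v₀ (f s) := (Finset.mem_filter.mp hs).2
    have h1 := htrans s 0
    rw [hf0, zero_sub] at h1
    exact Finset.mem_filter.mpr ⟨Finset.mem_univ _, h1.mp (T.adj_symm hadj)⟩
  -- a self-paired nonzero element exists
  have hex : ∃ s ∈ S, -s = s := by
    by_contra hno
    push_neg at hno
    exact (Nat.not_even_iff_odd.mpr hSodd) (even_card_of_neg_closed S hSsymm hno)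
  obtain ⟨s₀, hs₀S, hs₀⟩ := hex
  have hadj₀ : T.Adj v₀ (f s₀) := (Finset.mem_filter.mp hs₀S).2
  have hs₀0 : s₀ ≠ 0 := by
    rintro rfl
    rw [hf0] at hadj₀
    exact T.loopless.irrefl v₀ hadj₀
  have h2s : 2 * s₀.val = N := by
    rcases (ZMod.neg_eq_self_iff s₀).mp hs₀ with h | h
    · exact absurd h hs₀0
    · exact h
  -- 4 divides N
  have hα : Even (Fintype.card α) := even_card_of_odd_regular G hGreg hd₁
  have hβ : Even (Fintype.card β) := even_card_of_odd_regular H hHreg hd₂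
  obtain ⟨p, hp⟩ := hα
  obtain ⟨q, hq⟩ := hβ
  have hN4 : N = 4 * (p * q) := by
    rw [hNdef, Fintype.card_prod, hp, hq]; ring
  have hvaleven : Even s₀.val := ⟨p * q, by omega⟩
  -- the 2-coloring
  obtain ⟨C⟩ := hGbip
  set c : α × β → ZMod 2 := fun x => (((C x.1).val : ℕ) : ZMod 2) with hcdef
  have hcprop : ∀ {v w : α × β}, T.Adj v w → c v ≠ c w := by
    intro v w hvw heq
    refine C.valid hvw.1 (Fin.ext ?_)
    have h1 : ((((C v.1).val : ℕ) : ZMod 2)).val = (C v.1).val :=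
      ZMod.val_cast_of_lt (C v.1).isLt
    have h2 : ((((C w.1).val : ℕ) : ZMod 2)).val = (C w.1).val :=
      ZMod.val_cast_of_lt (C w.1).isLt
    rw [← h1, ← h2]
    exact congrArg ZMod.val heq
  -- reachability in the tensor product (Weichsel)
  have hGnbr : ∀ a : α, ∃ a', G.Adj a a' := by
    intro a
    rw [← G.degree_pos_iff_exists_adj, hGreg a]
    exact hd₁.pos
  have hHnbr : ∀ b : β, ∃ b', H.Adj b b' := by
    intro b
    rw [← H.degree_pos_iff_exists_adj, hHreg b]
    exact hd₂.pos
  have hreach : ∀ v w : α × β, T.Reachable v w := by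
    rintro ⟨a, b⟩ ⟨a', b'⟩
    obtain ⟨wG⟩ := hGconn a a'
    obtain ⟨wH, hwH⟩ := walks_all_parities H hHconn hHbip b b' wG.length
    have hmax := max_choice wG.length wH.length
    have hle1 : wG.length ≤ max wG.length wH.length := le_max_left _ _
    have hle2 : wH.length ≤ max wG.length wH.length := le_max_right _ _
    obtain ⟨k₁, hk₁⟩ : ∃ k, max wG.length wH.length = wG.length + 2 * k :=
      ⟨(max wG.length wH.length - wG.length) / 2, by omega⟩
    obtain ⟨k₂, hk₂⟩ : ∃ k, max wG.length wH.length = wH.length + 2 * k :=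
      ⟨(max wG.length wH.length - wH.length) / 2, by omega⟩
    obtain ⟨wG', hG'⟩ := pad_walk G hGnbr k₁ wG
    obtain ⟨wH', hH'⟩ := pad_walk H hHnbr k₂ wH
    obtain ⟨w⟩ := zip_walk G H (max wG.length wH.length) wG' wH' (by omega) (by omega)
    exact ⟨w⟩
  -- the parity-invariant ε
  have hedge : ∀ {v w : α × β}, T.Adj v w → c (π v) + c v = c (π w) + c w := by
    intro v w hvw
    have hZ : ∀ x y : ZMod 2, x ≠ y → y = x + 1 := by decide
    have h1 : c w = c v + 1 := hZ _ _ (hcprop hvw)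
    have hπadj : T.Adj (π v) (π w) := by
      have h := hAdjPow 1 v w
      rw [pow_one] at h
      exact h.mpr hvw
    have h2 : c (π w) = c (π v) + 1 := hZ _ _ (hcprop hπadj)
    rw [h1, h2]
    ring_nf
    rw [show (2 : ZMod 2) = 0 from by decide]
    ring
  have hwalkconst : ∀ {u v : α × β} (w : T.Walk u v), c (π u) + c u = c (π v) + c v := by
    intro u v w
    induction w with
    | nil => rfl
    | cons h p ih => rw [hedge h]; exact ih
  set ε : ZMod 2 := c (π v₀) + c v₀ with hε
  have hconst : ∀ v : α × β, c (π v) = c v + ε := by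
    intro v
    obtain ⟨w⟩ := hreach v₀ v
    have h2 : c (π v) + c v = ε := (hwalkconst w).symm
    have hZ2 : ∀ x y e : ZMod 2, x + y = e → x = y + e := by decide
    exact hZ2 _ _ _ h2
  have hpow : ∀ (k : ℕ) (v : α × β), c ((π ^ k) v) = c v + (k : ZMod 2) * ε := by
    intro k
    induction k with
    | zero => intro v; simp
    | succ k ih =>
      intro v
      have happ : (π ^ (k + 1)) v = (π ^ k) (π v) := by
        rw [pow_succ, Equiv.Perm.mul_apply]
      rw [happ, ih (π v), hconst v]
      push_cast
      ring
  -- final contradiction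
  have hfinal : c (f s₀) = c v₀ := by
    show c ((π ^ s₀.val) v₀) = c v₀
    rw [hpow]
    obtain ⟨r, hr⟩ := hvaleven
    have hz : ((s₀.val : ℕ) : ZMod 2) = 0 := by
      rw [hr]
      push_cast
      have hh : ∀ x : ZMod 2, x + x = 0 := by decide
      exact hh _
    rw [hz]
    ring
  exact hcprop hadj₀ hfinal.symm
end
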